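/- Fix ρ ∈ (0, 1) and T_s > 0. Define for T ≥ 0 the function F̄(T) = 1 - (1 - ρ) · Σ_{ν=0}^{⌊T/T_s⌋} ([ρ(ν - t)]^ν / ν!) · e^{-ρ(ν - t)}, where t = T/T_s. Then F̄ is continuous and monotonically decreasing on [0, ∞). -/

import Mathlib

open Real

/-- The complementary CDF `P(T_w > T)` of the stationary waiting time in an M/D/1 queue
with load `ρ` and deterministic service time `Ts`, from Erlang's principle of statistical
equilibrium:
`F̄(T) = 1 - (1-ρ) Σ_{ν=0}^{⌊T/Ts⌋} [ρ(ν-t)]^ν/ν! · e^{-ρ(ν-t)}`, with `t = T/Ts`. -/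
noncomputable def md1Tail (ρ Ts T : ℝ) : ℝ :=
  1 - (1 - ρ) * ∑ ν ∈ Finset.range (⌊T / Ts⌋₊ + 1),
    (ρ * ((ν : ℝ) - T / Ts)) ^ ν / (Nat.factorial ν) * Real.exp (-ρ * ((ν : ℝ) - T / Ts))

noncomputable def mg (ρ : ℝ) (ν : ℕ) (t : ℝ) : ℝ :=
  (ρ * ((ν : ℝ) - t)) ^ ν / (Nat.factorial ν) * Real.exp (-ρ * ((ν : ℝ) - t))

noncomputable def mQ (ρ : ℝ) (n : ℕ) (t : ℝ) : ℝ := ∑ ν ∈ Finset.range (n + 1), mg ρ ν t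

noncomputable def mD (ρ t : ℝ) : ℕ → ℝ
  | 0 => ρ * mg ρ 0 t
  | (m + 1) => ρ * (mg ρ (m + 1) t - mg ρ m (t - 1))

lemma mg_zero (ρ t : ℝ) : mg ρ 0 t = Real.exp (ρ * t) := by
  simp only [mg, pow_zero, Nat.factorial_zero, Nat.cast_one, div_one, one_mul, Nat.cast_zero]
  ring_nf

lemma mQ_zero (ρ t : ℝ) : mQ ρ 0 t = Real.exp (ρ * t) := by
  simp [mQ, mg_zero]

lemma differentiable_mg (ρ : ℝ) (ν : ℕ) : Differentiable ℝ (mg ρ ν) := by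
  unfold mg
  fun_prop

lemma differentiable_mQ (ρ : ℝ) (n : ℕ) : Differentiable ℝ (mQ ρ n) := by
  unfold mQ
  apply Differentiable.fun_sum
  intro i _
  exact differentiable_mg ρ i

lemma continuous_mQ (ρ : ℝ) (n : ℕ) : Continuous (mQ ρ n) :=
  (differentiable_mQ ρ n).continuous

lemma hasDerivAt_mg_zero (ρ t : ℝ) : HasDerivAt (mg ρ 0) (ρ * mg ρ 0 t) t := by
  have h := ((hasDerivAt_id t).const_mul ρ).exp
  simp only [id_eq, mul_one] at h
  have h2 : (fun s => Real.exp (ρ * s)) = mg ρ 0 := by funext s; rw [mg_zero]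
  rw [h2] at h
  rw [mg_zero]
  simpa [mul_comm] using h

lemma hasDerivAt_mg_succ (ρ : ℝ) (ν : ℕ) (t : ℝ) :
    HasDerivAt (mg ρ (ν + 1)) (ρ * (mg ρ (ν + 1) t - mg ρ ν (t - 1))) t := by
  have hu : HasDerivAt (fun s : ℝ => ρ * (((ν : ℝ) + 1) - s)) (-ρ) t := by
    simpa using ((hasDerivAt_id t).const_sub (((ν : ℝ) + 1))).const_mul ρ
  set u : ℝ := ρ * (((ν : ℝ) + 1) - t) with hudef
  have hpow : HasDerivAt (fun s : ℝ => (ρ * (((ν : ℝ) + 1) - s)) ^ (ν + 1))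
      ((ν + 1 : ℕ) * u ^ ν * (-ρ)) t := hu.pow (ν + 1)
  have hdiv := hpow.div_const ((Nat.factorial (ν + 1) : ℝ))
  have hexp : HasDerivAt (fun s : ℝ => Real.exp (-(ρ * (((ν : ℝ) + 1) - s))))
      (Real.exp (-u) * ρ) t := by
    simpa using hu.neg.exp
  have hmul := hdiv.fun_mul hexp
  have heq : mg ρ (ν + 1) = fun s : ℝ =>
      (ρ * (((ν : ℝ) + 1) - s)) ^ (ν + 1) / (Nat.factorial (ν + 1) : ℝ) *
        Real.exp (-(ρ * (((ν : ℝ) + 1) - s))) := by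
    funext s
    simp only [mg, Nat.cast_succ]
    ring_nf
  rw [← heq] at hmul
  have hfac : (Nat.factorial (ν + 1) : ℝ) = ((ν : ℝ) + 1) * (Nat.factorial ν : ℝ) := by
    rw [Nat.factorial_succ]; push_cast; ring
  have hg1 : mg ρ (ν + 1) t = u ^ (ν + 1) / (Nat.factorial (ν + 1) : ℝ) * Real.exp (-u) := by
    simp only [mg, Nat.cast_succ, hudef]
    ring_nf
  have hg2 : mg ρ ν (t - 1) = u ^ ν / (Nat.factorial ν : ℝ) * Real.exp (-u) := by
    simp only [mg, hudef]
    ring_nf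
  refine hmul.congr_deriv ?_
  rw [hg1, hg2, ← hudef]
  have h1 : (Nat.factorial ν : ℝ) ≠ 0 := Nat.cast_ne_zero.2 (Nat.factorial_ne_zero ν)
  have h2 : ((ν : ℝ) + 1) ≠ 0 := by positivity
  rw [hfac]
  push_cast
  field_simp
  ring

lemma hasDerivAt_mQ (ρ : ℝ) (n : ℕ) (t : ℝ) :
    HasDerivAt (mQ ρ (n + 1)) (ρ * (mQ ρ (n + 1) t - mQ ρ n (t - 1))) t := by
  have h : ∀ ν ∈ Finset.range (n + 2), HasDerivAt (mg ρ ν) (mD ρ t ν) t := by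
    intro ν _
    cases ν with
    | zero => exact hasDerivAt_mg_zero ρ t
    | succ m => exact hasDerivAt_mg_succ ρ m t
  have hsum := HasDerivAt.fun_sum h
  have hQ : (fun s => ∑ ν ∈ Finset.range (n + 2), mg ρ ν s) = mQ ρ (n + 1) := rfl
  rw [hQ] at hsum
  refine hsum.congr_deriv ?_
  rw [Finset.sum_range_succ' (mD ρ t) (n + 1)]
  simp only [mD, mQ]
  rw [Finset.sum_range_succ' (fun ν => mg ρ ν t) (n + 1)]
  simp only [mul_sub, Finset.sum_sub_distrib, Finset.mul_sum]
  rw [mul_add, Finset.mul_sum]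
  ring


lemma mQ_floor_eq (ρ : ℝ) (n : ℕ) {t : ℝ} (ht : t ∈ Set.Icc (n : ℝ) ((n : ℝ) + 1)) :
    mQ ρ ⌊t⌋₊ t = mQ ρ n t := by
  rcases eq_or_lt_of_le ht.2 with h | h
  · have hfl : ⌊t⌋₊ = n + 1 := by
      rw [h, show ((n : ℝ) + 1) = ((n + 1 : ℕ) : ℝ) by push_cast; ring]
      exact Nat.floor_natCast _
    rw [hfl]
    have h0 : ρ * (((n + 1 : ℕ) : ℝ) - t) = 0 := by rw [h]; push_cast; ring
    have hzero : mg ρ (n + 1) t = 0 := by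
      unfold mg
      rw [h0]
      simp
    simp [mQ, Finset.sum_range_succ, hzero]
  · have h0 : (0 : ℝ) ≤ t := le_trans (Nat.cast_nonneg n) ht.1
    have hfl : ⌊t⌋₊ = n := (Nat.floor_eq_iff h0).2 ⟨ht.1, h⟩
    rw [hfl]

lemma mQ_mono_interval (ρ : ℝ) (hρ : 0 < ρ) (n : ℕ) {a b : ℝ}
    (hub : ∀ t ∈ Set.Icc a b, mQ ρ n (t - 1) ≤ mQ ρ (n + 1) a) :
    MonotoneOn (mQ ρ (n + 1)) (Set.Icc a b) := by
  set c := mQ ρ (n + 1) a with hc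
  have hψd : ∀ t : ℝ, HasDerivAt (fun s => Real.exp (-ρ * s) * (mQ ρ (n + 1) s - c))
      (Real.exp (-ρ * t) * ρ * (c - mQ ρ n (t - 1))) t := by
    intro t
    have h1 : HasDerivAt (fun s : ℝ => Real.exp (-ρ * s)) (Real.exp (-ρ * t) * (-ρ)) t := by
      simpa using ((hasDerivAt_id t).const_mul (-ρ)).exp
    have h2 : HasDerivAt (fun s => mQ ρ (n + 1) s - c)
        (ρ * (mQ ρ (n + 1) t - mQ ρ n (t - 1))) t :=
      (hasDerivAt_mQ ρ n t).sub_const c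
    have h3 := h1.fun_mul h2
    refine h3.congr_deriv ?_
    ring
  have hψdiff : Differentiable ℝ (fun s => Real.exp (-ρ * s) * (mQ ρ (n + 1) s - c)) :=
    fun x => (hψd x).differentiableAt
  have hlb : ∀ t ∈ Set.Icc a b, c ≤ mQ ρ (n + 1) t := by
    intro t ht
    have hmono : MonotoneOn (fun s => Real.exp (-ρ * s) * (mQ ρ (n + 1) s - c))
        (Set.Icc a b) := by
      apply monotoneOn_of_deriv_nonneg (convex_Icc a b) hψdiff.continuous.continuousOn
        hψdiff.differentiableOn
      intro x hx
      rw [(hψd x).deriv]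
      rw [interior_Icc] at hx
      have hx' : x ∈ Set.Icc a b := Set.Ioo_subset_Icc_self hx
      have h4 := hub x hx'
      have h5 : 0 ≤ c - mQ ρ n (x - 1) := by rw [hc]; linarith
      exact mul_nonneg (mul_nonneg (Real.exp_pos _).le hρ.le) h5
    have hmem : a ∈ Set.Icc a b := ⟨le_refl a, le_trans ht.1 ht.2⟩
    have h1 := hmono hmem ht ht.1
    simp only at h1
    rw [← hc] at h1
    simp only [sub_self, mul_zero] at h1
    nlinarith [Real.exp_pos (-ρ * t), h1]
  apply monotoneOn_of_deriv_nonneg (convex_Icc a b) (continuous_mQ ρ (n + 1)).continuousOn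
    (differentiable_mQ ρ (n + 1)).differentiableOn
  intro x hx
  rw [(hasDerivAt_mQ ρ n x).deriv]
  rw [interior_Icc] at hx
  have hx' : x ∈ Set.Icc a b := Set.Ioo_subset_Icc_self hx
  have h1 := hub x hx'
  have h2 := hlb x hx'
  nlinarith

lemma f_mono (ρ : ℝ) (hρ0 : 0 < ρ) :
    ∀ n : ℕ, MonotoneOn (fun t => mQ ρ ⌊t⌋₊ t) (Set.Icc 0 ((n : ℝ) + 1)) := by
  intro n
  induction n with
  | zero =>
    intro x hx y hy hxy
    rw [Set.mem_Icc] at hx hy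
    push_cast at hx hy
    simp only
    rw [mQ_floor_eq ρ 0 (Set.mem_Icc.2 ⟨by exact_mod_cast hx.1, by push_cast; linarith [hx.2]⟩),
      mQ_floor_eq ρ 0 (Set.mem_Icc.2 ⟨by exact_mod_cast hy.1, by push_cast; linarith [hy.2]⟩)]
    rw [mQ_zero, mQ_zero]
    exact Real.exp_le_exp.2 (by nlinarith)
  | succ n ih =>
    have hfl : (⌊((n : ℝ) + 1)⌋₊) = n + 1 := by
      rw [show ((n : ℝ) + 1) = ((n + 1 : ℕ) : ℝ) by push_cast; ring]
      exact Nat.floor_natCast _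
    have hub : ∀ t ∈ Set.Icc ((n : ℝ) + 1) ((n : ℝ) + 2),
        mQ ρ n (t - 1) ≤ mQ ρ (n + 1) ((n : ℝ) + 1) := by
      intro t ht
      rw [Set.mem_Icc] at ht
      have ht1 : t - 1 ∈ Set.Icc ((n : ℝ)) ((n : ℝ) + 1) := ⟨by linarith, by linarith⟩
      have h01 : t - 1 ∈ Set.Icc (0 : ℝ) ((n : ℝ) + 1) :=
        ⟨le_trans (Nat.cast_nonneg n) ht1.1, ht1.2⟩
      have hn1 : ((n : ℝ) + 1) ∈ Set.Icc (0 : ℝ) ((n : ℝ) + 1) := ⟨by positivity, le_refl _⟩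
      calc mQ ρ n (t - 1) = mQ ρ ⌊t - 1⌋₊ (t - 1) := (mQ_floor_eq ρ n ht1).symm
        _ ≤ mQ ρ ⌊((n : ℝ) + 1)⌋₊ ((n : ℝ) + 1) := ih h01 hn1 ht1.2
        _ = mQ ρ (n + 1) ((n : ℝ) + 1) := by rw [hfl]
    have hmono2 : MonotoneOn (mQ ρ (n + 1)) (Set.Icc ((n : ℝ) + 1) ((n : ℝ) + 2)) :=
      mQ_mono_interval ρ hρ0 n hub
    intro x hx y hy hxy
    rw [Set.mem_Icc] at hx hy
    push_cast at hx hy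
    simp only
    by_cases hy1 : y ≤ (n : ℝ) + 1
    · exact ih (Set.mem_Icc.2 ⟨hx.1, le_trans hxy hy1⟩) (Set.mem_Icc.2 ⟨hy.1, hy1⟩) hxy
    · push_neg at hy1
      have hyI : y ∈ Set.Icc ((n : ℝ) + 1) ((n : ℝ) + 2) := ⟨hy1.le, by linarith [hy.2]⟩
      have hfy : mQ ρ ⌊y⌋₊ y = mQ ρ (n + 1) y :=
        mQ_floor_eq ρ (n + 1) ⟨by push_cast; linarith, by push_cast; linarith [hy.2]⟩
      by_cases hx1 : (n : ℝ) + 1 ≤ x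
      · have hxI : x ∈ Set.Icc ((n : ℝ) + 1) ((n : ℝ) + 2) := ⟨hx1, by linarith [hx.2]⟩
        have hfx : mQ ρ ⌊x⌋₊ x = mQ ρ (n + 1) x :=
          mQ_floor_eq ρ (n + 1) ⟨by push_cast; linarith, by push_cast; linarith [hx.2]⟩
        rw [hfx, hfy]
        exact hmono2 hxI hyI hxy
      · push_neg at hx1
        have h1 : mQ ρ ⌊x⌋₊ x ≤ mQ ρ ⌊((n : ℝ) + 1)⌋₊ ((n : ℝ) + 1) :=
          ih (Set.mem_Icc.2 ⟨hx.1, hx1.le⟩) (Set.mem_Icc.2 ⟨by positivity, le_refl _⟩) hx1.le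
        have h2 : mQ ρ (n + 1) ((n : ℝ) + 1) ≤ mQ ρ (n + 1) y :=
          hmono2 ⟨le_refl _, by linarith⟩ hyI hy1.le
        rw [hfy]
        calc mQ ρ ⌊x⌋₊ x ≤ mQ ρ ⌊((n : ℝ) + 1)⌋₊ ((n : ℝ) + 1) := h1
          _ = mQ ρ (n + 1) ((n : ℝ) + 1) := by rw [hfl]
          _ ≤ mQ ρ (n + 1) y := h2

lemma f_mono' (ρ : ℝ) (hρ0 : 0 < ρ) :
    MonotoneOn (fun t => mQ ρ ⌊t⌋₊ t) (Set.Ici 0) := by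
  intro x hx y hy hxy
  have hy' : y < (⌊y⌋₊ : ℝ) + 1 := Nat.lt_floor_add_one y
  exact f_mono ρ hρ0 ⌊y⌋₊ (Set.mem_Icc.2 ⟨hx, by linarith⟩)
    (Set.mem_Icc.2 ⟨hy, hy'.le⟩) hxy

lemma f_cont_interval (ρ : ℝ) (n : ℕ) :
    ContinuousOn (fun t => mQ ρ ⌊t⌋₊ t) (Set.Icc ((n : ℝ)) ((n : ℝ) + 1)) :=
  (continuous_mQ ρ n).continuousOn.congr (fun _ ht => mQ_floor_eq ρ n ht)

lemma f_cont_Icc (ρ : ℝ) :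
    ∀ n : ℕ, ContinuousOn (fun t => mQ ρ ⌊t⌋₊ t) (Set.Icc 0 ((n : ℝ) + 1)) := by
  intro n
  induction n with
  | zero =>
    have := f_cont_interval ρ 0
    simpa using this
  | succ n ih =>
    have h2 : ContinuousOn (fun t => mQ ρ ⌊t⌋₊ t) (Set.Icc ((n : ℝ) + 1) ((n : ℝ) + 2)) := by
      have h := f_cont_interval ρ (n + 1)
      have e : Set.Icc (((n + 1 : ℕ)) : ℝ) ((((n + 1 : ℕ)) : ℝ) + 1)
          = Set.Icc ((n : ℝ) + 1) ((n : ℝ) + 2) := by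
        push_cast
        rw [show ((n : ℝ) + 1 + 1) = (n : ℝ) + 2 by ring]
      rwa [e] at h
    have e2 : Set.Icc (0 : ℝ) ((((n + 1 : ℕ)) : ℝ) + 1) = Set.Icc (0 : ℝ) ((n : ℝ) + 2) := by
      push_cast
      rw [show ((n : ℝ) + 1 + 1) = (n : ℝ) + 2 by ring]
    rw [e2]
    intro x hx
    have hsub : Set.Icc (0 : ℝ) ((n : ℝ) + 2) ⊆
        Set.Icc (0 : ℝ) ((n : ℝ) + 1) ∪ Set.Icc ((n : ℝ) + 1) ((n : ℝ) + 2) := by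
      intro z hz
      rw [Set.mem_Icc] at hz
      by_cases h : z ≤ (n : ℝ) + 1
      · exact Or.inl ⟨hz.1, h⟩
      · exact Or.inr ⟨(not_le.1 h).le, hz.2⟩
    have hu : ContinuousWithinAt (fun t => mQ ρ ⌊t⌋₊ t)
        (Set.Icc (0 : ℝ) ((n : ℝ) + 1) ∪ Set.Icc ((n : ℝ) + 1) ((n : ℝ) + 2)) x := by
      apply ContinuousWithinAt.union
      · by_cases hmem : x ∈ Set.Icc (0 : ℝ) ((n : ℝ) + 1)
        · exact ih x hmem
        · exact continuousWithinAt_of_notMem_closure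
            (by rwa [IsClosed.closure_eq isClosed_Icc])
      · by_cases hmem : x ∈ Set.Icc ((n : ℝ) + 1) ((n : ℝ) + 2)
        · exact h2 x hmem
        · exact continuousWithinAt_of_notMem_closure
            (by rwa [IsClosed.closure_eq isClosed_Icc])
    exact hu.mono hsub

lemma f_cont (ρ : ℝ) : ContinuousOn (fun t => mQ ρ ⌊t⌋₊ t) (Set.Ici 0) := by
  intro x hx
  have hxlt : x < (⌊x⌋₊ : ℝ) + 1 := Nat.lt_floor_add_one x
  have h1 : ContinuousWithinAt (fun t => mQ ρ ⌊t⌋₊ t)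
      (Set.Icc 0 ((⌊x⌋₊ : ℝ) + 1)) x :=
    f_cont_Icc ρ ⌊x⌋₊ x (Set.mem_Icc.2 ⟨hx, hxlt.le⟩)
  apply h1.mono_of_mem_nhdsWithin
  rw [mem_nhdsWithin]
  exact ⟨Set.Iio ((⌊x⌋₊ : ℝ) + 1), isOpen_Iio, hxlt, fun z hz => ⟨hz.2, hz.1.le⟩⟩

lemma md1Tail_eq (ρ Ts T : ℝ) :
    md1Tail ρ Ts T = 1 - (1 - ρ) * mQ ρ ⌊T / Ts⌋₊ (T / Ts) := rfl

/-- For `ρ ∈ (0,1)` and `Ts > 0`, the M/D/1 waiting-time CCDF is continuous and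
monotonically decreasing on `[0, ∞)`. -/
theorem md1Tail_continuous_antitone (ρ Ts : ℝ) (hρ0 : 0 < ρ) (hρ1 : ρ < 1) (hTs : 0 < Ts) :
    ContinuousOn (md1Tail ρ Ts) (Set.Ici 0) ∧ AntitoneOn (md1Tail ρ Ts) (Set.Ici 0) := by
  have hdiv : Set.MapsTo (fun T : ℝ => T / Ts) (Set.Ici 0) (Set.Ici 0) :=
    fun T hT => div_nonneg hT hTs.le
  constructor
  · have hcomp : ContinuousOn (fun T : ℝ => mQ ρ ⌊T / Ts⌋₊ (T / Ts)) (Set.Ici 0) :=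
      (f_cont ρ).comp (continuous_id.div_const Ts).continuousOn hdiv
    have h : ContinuousOn (fun T : ℝ => 1 - (1 - ρ) * mQ ρ ⌊T / Ts⌋₊ (T / Ts)) (Set.Ici 0) :=
      continuousOn_const.sub (continuousOn_const.mul hcomp)
    exact h.congr (fun T _ => md1Tail_eq ρ Ts T)
  · intro x hx y hy hxy
    rw [md1Tail_eq, md1Tail_eq]
    have h1 : x / Ts ≤ y / Ts := by gcongr
    have h2 := f_mono' ρ hρ0 (hdiv hx) (hdiv hy) h1
    simp only at h2
    nlinarith [h2]
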